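/- For z = E + iη with |E| < 3 and 0 < η ≤ 3, there exist constants c, C > 0 such that c ≤ |m_sc(z)| ≤ C and c√(κ+η) ≤ |1 - m_sc(z)²| ≤ C√(κ+η), where κ = ||E| - 2|. -/

import Mathlib

private lemma msc_aux_P1 (κ η : ℝ) : (κ + η) ^ 2 ≤ 2 * (κ ^ 2 + η ^ 2) := by
  nlinarith [sq_nonneg (κ - η)]

private lemma msc_aux_P2 (κ η : ℝ) (h1 : 0 ≤ κ) (h2 : 0 ≤ η) :
    κ ^ 2 + η ^ 2 ≤ (κ + η) ^ 2 := by nlinarith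

private lemma msc_aux_Q1 (s η : ℝ) (h0 : 0 ≤ s) : (4:ℝ) ≤ (s + 2) ^ 2 + η ^ 2 := by
  nlinarith [sq_nonneg η]

private lemma msc_aux_Q2 (s η : ℝ) (h0 : 0 ≤ s) (h3 : s < 3) (h4 : η ≤ 3) (h5 : 0 ≤ η) :
    (s + 2) ^ 2 + η ^ 2 ≤ 34 := by
  nlinarith [mul_pos (sub_pos.2 h3) (show (0:ℝ) < s + 3 by linarith), mul_nonneg (show (0:ℝ) ≤ 3 - η by linarith) (show (0:ℝ) ≤ 3 + η by linarith)]

/-- On the domain `z = E + iη`, `|E| < 3`, `0 < η ≤ 3`, there are constants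
`c, C > 0` with `c ≤ |m_sc(z)| ≤ C` and `c√(κ+η) ≤ |1 - m_sc(z)²| ≤ C√(κ+η)`,
where `κ = ||E| - 2|` and `m_sc(z)` is characterized by `m² + zm + 1 = 0`, `Im m > 0`. -/
theorem msc_basic_bounds :
    ∃ c C : ℝ, 0 < c ∧ 0 < C ∧
      ∀ (E η : ℝ) (m : ℂ), |E| < 3 → 0 < η → η ≤ 3 →
        m ^ 2 + ((E : ℂ) + (η : ℂ) * Complex.I) * m + 1 = 0 → 0 < m.im →
        (c ≤ ‖m‖ ∧ ‖m‖ ≤ C ∧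
         c * Real.sqrt (|(|E| - 2)| + η) ≤ ‖1 - m ^ 2‖ ∧
         ‖1 - m ^ 2‖ ≤ C * Real.sqrt (|(|E| - 2)| + η)) := by
  refine ⟨1/11, 15, by norm_num, by norm_num, ?_⟩
  intro E η m hE hη1 hη2 heq _
  set z : ℂ := (E : ℂ) + (η : ℂ) * Complex.I with hzdef
  clear_value z
  have hEb := abs_lt.mp hE
  have hz2 : (‖z‖) ^ 2 = E ^ 2 + η ^ 2 := by
    rw [Complex.sq_norm, Complex.normSq_apply]
    simp [hzdef]
    ring
  have hz0 : (0:ℝ) ≤ ‖z‖ := norm_nonneg z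
  have hzle : ‖z‖ ≤ 5 := by nlinarith
  -- m ≠ 0 and |m| bounds
  have hm0 : (0:ℝ) ≤ ‖m‖ := norm_nonneg m
  have key1 : m * (m + z) = -1 := by linear_combination heq
  have habs1 : ‖m‖ * ‖m + z‖ = 1 := by
    rw [← norm_mul, key1]; simp
  have hmsq : m ^ 2 = -(z * m + 1) := by linear_combination heq
  have hmsqabs : (‖m‖) ^ 2 ≤ ‖z‖ * ‖m‖ + 1 := by
    calc (‖m‖) ^ 2 = ‖m ^ 2‖ := by rw [norm_pow]
    _ = ‖z * m + 1‖ := by rw [hmsq, norm_neg]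
    _ ≤ ‖z * m‖ + 1 := by
        simpa using norm_add_le (z * m) 1
    _ = ‖z‖ * ‖m‖ + 1 := by rw [norm_mul]
  have hmle : ‖m‖ ≤ 6 := by nlinarith
  have htri : ‖m + z‖ ≤ ‖m‖ + ‖z‖ :=
    norm_add_le m z
  have hmge : 1/11 ≤ ‖m‖ := by nlinarith
  -- the quantity A = |1 - m^2|
  set A : ℝ := ‖1 - m ^ 2‖ with hAdef
  clear_value A
  have hA0 : 0 ≤ A := hAdef ▸ norm_nonneg _
  have e1 : 1 - m ^ 2 = -(m * (2 * m + z)) := by linear_combination heq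
  have e2 : (2 * m + z) ^ 2 = (z - 2) * (z + 2) := by linear_combination 4 * heq
  have hA : A = ‖m‖ * ‖2 * m + z‖ := by
    rw [hAdef, e1, norm_neg, norm_mul]
  have hB : (‖2 * m + z‖) ^ 2 = ‖z - 2‖ * ‖z + 2‖ := by
    rw [← norm_pow, e2, norm_mul]
  have hzm : (‖z - 2‖) ^ 2 = (E - 2) ^ 2 + η ^ 2 := by
    rw [Complex.sq_norm, Complex.normSq_apply]
    simp [hzdef]
    ring
  have hzp : (‖z + 2‖) ^ 2 = (E + 2) ^ 2 + η ^ 2 := by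
    rw [Complex.sq_norm, Complex.normSq_apply]
    simp [hzdef]
    ring
  have hA2 : A ^ 2 = (‖m‖) ^ 2 * (‖z - 2‖ * ‖z + 2‖) := by
    rw [hA, mul_pow, hB]
  have hA4 : A ^ 4 = (‖m‖) ^ 4 * (((E - 2) ^ 2 + η ^ 2) * ((E + 2) ^ 2 + η ^ 2)) := by
    linear_combination (A ^ 2 + (‖m‖) ^ 2 * (‖z - 2‖ * ‖z + 2‖)) * hA2
      + (‖m‖) ^ 4 * (‖z + 2‖) ^ 2 * hzm
      + (‖m‖) ^ 4 * ((E - 2) ^ 2 + η ^ 2) * hzp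
  -- real manipulations
  set s : ℝ := |E| with hsdef
  clear_value s
  set κ : ℝ := |s - 2| with hκdef
  clear_value κ
  have hs0 : 0 ≤ s := hsdef ▸ abs_nonneg E
  have hs3 : s < 3 := hE
  have hsE : s ^ 2 = E ^ 2 := hsdef ▸ sq_abs E
  have hκ2 : κ ^ 2 = (s - 2) ^ 2 := hκdef ▸ sq_abs _
  have hκ0 : 0 ≤ κ := hκdef ▸ abs_nonneg _
  have hκle : κ ≤ 2 := by
    rw [hκdef, abs_le]; constructor <;> linarith
  have hprod : ((E - 2) ^ 2 + η ^ 2) * ((E + 2) ^ 2 + η ^ 2)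
      = (κ ^ 2 + η ^ 2) * ((s + 2) ^ 2 + η ^ 2) := by
    rw [hκ2]
    linear_combination (8 - E ^ 2 - s ^ 2 - 2 * η ^ 2) * hsE
  -- sqrt facts
  have hkη0 : 0 ≤ κ + η := by linarith
  set r : ℝ := Real.sqrt (κ + η) with hrdef
  clear_value r
  have hr0 : 0 ≤ r := hrdef ▸ Real.sqrt_nonneg _
  have hr2 : r ^ 2 = κ + η := hrdef ▸ Real.sq_sqrt hkη0
  have hA4' : A ^ 4 = (‖m‖) ^ 4 * ((κ ^ 2 + η ^ 2) * ((s + 2) ^ 2 + η ^ 2)) := by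
    rw [hA4, hprod]
  clear heq hmsq key1 habs1 hmsqabs htri e1 e2 hA hB hzm hzp hA2 hA4 hprod
  clear hz2 hz0 hzle hzdef hAdef hsdef hκdef hrdef hE hEb
  have hP1 : (κ + η) ^ 2 ≤ 2 * (κ ^ 2 + η ^ 2) := msc_aux_P1 κ η
  have hP2 : κ ^ 2 + η ^ 2 ≤ (κ + η) ^ 2 := msc_aux_P2 κ η hκ0 hη1.le
  have hQ1 : (4:ℝ) ≤ (s + 2) ^ 2 + η ^ 2 := msc_aux_Q1 s η hs0
  have hQ2 : (s + 2) ^ 2 + η ^ 2 ≤ 34 := msc_aux_Q2 s η hs0 hs3 hη2 hη1.le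
  set u : ℝ := ‖m‖ with hudef
  clear_value u
  have hu0 : 0 ≤ u := hudef ▸ hm0
  have hP0 : 0 ≤ κ ^ 2 + η ^ 2 := by positivity
  have hQ0 : (0:ℝ) ≤ (s + 2) ^ 2 + η ^ 2 := by positivity
  have hlow : (1/11 * r) ^ 4 ≤ A ^ 4 := by
    have h1 : (κ + η) ^ 2 ≤ (κ ^ 2 + η ^ 2) * ((s + 2) ^ 2 + η ^ 2) := by
      have h2 : (κ ^ 2 + η ^ 2) * 2 ≤ (κ ^ 2 + η ^ 2) * ((s + 2) ^ 2 + η ^ 2) :=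
        mul_le_mul_of_nonneg_left (by linarith) hP0
      linarith
    have hu4 : ((1:ℝ)/11) ^ 4 ≤ u ^ 4 := pow_le_pow_left₀ (by norm_num) hmge 4
    calc (1/11 * r) ^ 4 = (1/11) ^ 4 * (r ^ 2) ^ 2 := by ring
    _ = (1/11) ^ 4 * (κ + η) ^ 2 := by rw [hr2]
    _ ≤ u ^ 4 * ((κ ^ 2 + η ^ 2) * ((s + 2) ^ 2 + η ^ 2)) :=
        mul_le_mul hu4 h1 (sq_nonneg _) (by positivity)
    _ = A ^ 4 := hA4'.symm
  have hhigh : A ^ 4 ≤ (15 * r) ^ 4 := by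
    have hu4 : u ^ 4 ≤ 1296 := by
      have := pow_le_pow_left₀ hu0 hmle 4
      norm_num at this; linarith
    have h1 : (κ ^ 2 + η ^ 2) * ((s + 2) ^ 2 + η ^ 2) ≤ (κ + η) ^ 2 * 34 :=
      mul_le_mul hP2 hQ2 hQ0 (sq_nonneg _)
    calc A ^ 4 = u ^ 4 * ((κ ^ 2 + η ^ 2) * ((s + 2) ^ 2 + η ^ 2)) := hA4'
    _ ≤ 1296 * ((κ + η) ^ 2 * 34) :=
        mul_le_mul hu4 h1 (by positivity) (by norm_num)
    _ ≤ 50625 * (κ + η) ^ 2 := by nlinarith [sq_nonneg (κ + η)]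
    _ = 50625 * (r ^ 2) ^ 2 := by rw [hr2]
    _ = (15 * r) ^ 4 := by ring
  refine ⟨hmge, by linarith, ?_, ?_⟩
  · exact le_of_pow_le_pow_left₀ (by norm_num) hA0 hlow
  · exact le_of_pow_le_pow_left₀ (by norm_num) (by positivity) hhigh
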